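/- arXiv:1708.04144 — 7 statements merged into one kernel-verified Lean document; each statement's English description precedes it below -/
import Mathlib

section
/- Let A, S, P₀ be real n×n matrices. Define P : ℝ → Matrix (Fin n) (Fin n) ℝ by P(t) = exp(tA) * P₀ * exp(tAᵀ) + ∫ s in (0)..(t), exp(sA) * (S * Sᵀ) * exp(sAᵀ) ds. Then P(0) = P₀ and for every t ∈ ℝ, P is differentiable at t with derivative P'(t) = A * P(t) + P(t) * Aᵀ + S * Sᵀ. (Solution formula for the differential Lyapunov equation governing the covariance of the additive-noise SPDE model.) -/
open scoped Matrix
open NormedSpace MeasureTheory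

attribute [local instance] Matrix.linftyOpNormedRing Matrix.linftyOpNormedAlgebra

/-- Solution formula for the differential Lyapunov equation
`Ṗ(t) = A P(t) + P(t) Aᵀ + S Sᵀ` governing the covariance of the
additive-noise SPDE model. -/
theorem lyapunov_solution_formula (n : ℕ) (A S P₀ : Matrix (Fin n) (Fin n) ℝ)
    (P : ℝ → Matrix (Fin n) (Fin n) ℝ)
    (hP : ∀ t : ℝ, P t =
      exp (t • A) * P₀ * exp (t • Aᵀ) +
        ∫ s in (0:ℝ)..t, exp (s • A) * (S * Sᵀ) * exp (s • Aᵀ)) :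
    P 0 = P₀ ∧ ∀ t : ℝ, HasDerivAt P (A * P t + P t * Aᵀ + S * Sᵀ) t := by
  set g : ℝ → Matrix (Fin n) (Fin n) ℝ := fun s => exp (s • A) * (S * Sᵀ) * exp (s • Aᵀ)
    with hg_def
  haveI : TopologicalSpace.PseudoMetrizableSpace (Matrix (Fin n) (Fin n) ℝ) :=
    PseudoEMetricSpace.pseudoMetrizableSpace
  letI : ENormedAddMonoid (Matrix (Fin n) (Fin n) ℝ) :=
    NormedAddCommGroup.toENormedAddCommMonoid.toENormedAddMonoid
  set F : ℝ → Matrix (Fin n) (Fin n) ℝ := fun t => exp (t • A) * P₀ * exp (t • Aᵀ)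
    with hF_def
  set G : ℝ → Matrix (Fin n) (Fin n) ℝ := fun t => ∫ s in (0:ℝ)..t, g s with hG_def
  have hPFG : ∀ t, P t = F t + G t := hP
  have hg0 : g 0 = S * Sᵀ := by simp [hg_def, exp_zero]
  have hF0 : F 0 = P₀ := by simp [hF_def, exp_zero]
  -- derivatives
  have hg_deriv : ∀ s : ℝ, HasDerivAt g (A * g s + g s * Aᵀ) s := by
    intro s
    have h1 := (hasDerivAt_exp_smul_const' A s).mul_const (S * Sᵀ)
    have h2 := h1.mul (hasDerivAt_exp_smul_const Aᵀ s)
    convert h2 using 1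
    · rfl
    · rfl
    · rfl
    · rfl
    · simp only [g]
      noncomm_ring
  have hF_deriv : ∀ t : ℝ, HasDerivAt F (A * F t + F t * Aᵀ) t := by
    intro t
    have h1 := (hasDerivAt_exp_smul_const' A t).mul_const P₀
    have h2 := h1.mul (hasDerivAt_exp_smul_const Aᵀ t)
    convert h2 using 1
    · rfl
    · rfl
    · rfl
    · rfl
    · simp only [F]
      noncomm_ring
  have hg_cont : Continuous g :=
    continuous_iff_continuousAt.2 fun s => (hg_deriv s).continuousAt
  have hG_deriv : ∀ t : ℝ, HasDerivAt G (g t) t := by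
    intro t
    exact intervalIntegral.integral_hasDerivAt_right
      (hg_cont.intervalIntegrable _ _)
      (hg_cont.stronglyMeasurableAtFilter _ _)
      hg_cont.continuousAt
  -- key identity: g t = A * G t + G t * Aᵀ + S * Sᵀ
  have hkey : ∀ t : ℝ, g t = A * G t + G t * Aᵀ + S * Sᵀ := by
    intro t
    have hderivcont : Continuous fun s => A * g s + g s * Aᵀ := by
      exact ((continuous_const.mul hg_cont).add (hg_cont.mul continuous_const))
    have hint : IntervalIntegrable (fun s => A * g s + g s * Aᵀ) volume 0 t :=
      hderivcont.intervalIntegrable _ _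
    have hFTC : (∫ s in (0:ℝ)..t, (A * g s + g s * Aᵀ)) = g t - g 0 :=
      intervalIntegral.integral_eq_sub_of_hasDerivAt (fun s _ => hg_deriv s) hint
    have hsplit : (∫ s in (0:ℝ)..t, (A * g s + g s * Aᵀ))
        = A * G t + G t * Aᵀ := by
      rw [intervalIntegral.integral_add (f := fun s => A * g s) (g := fun s => g s * Aᵀ)
        ((continuous_const.mul hg_cont).intervalIntegrable _ _)
        ((hg_cont.mul continuous_const).intervalIntegrable _ _)]
      congr 1
      · exact ((ContinuousLinearMap.mul ℝ (Matrix (Fin n) (Fin n) ℝ) A).intervalIntegral_comp_comm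
          (hg_cont.intervalIntegrable _ _))
      · exact (((ContinuousLinearMap.mul ℝ (Matrix (Fin n) (Fin n) ℝ)).flip Aᵀ).intervalIntegral_comp_comm
          (hg_cont.intervalIntegrable _ _))
    rw [hsplit, hg0] at hFTC
    linear_combination (norm := abel) hFTC.symm
  constructor
  · rw [hPFG 0, hF0]
    simp [hG_def]
  · intro t
    have hd : HasDerivAt (fun t => F t + G t)
        (A * F t + F t * Aᵀ + g t) t := (hF_deriv t).add (hG_deriv t)
    have heq : (fun t => F t + G t) = P := by
      funext u; exact (hPFG u).symm
    rw [heq] at hd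
    convert hd using 1
    rw [hPFG t, hkey t]
    noncomm_ring
end

section
/- Let A, S, P₀ be real n×n matrices and let Q : ℝ → Matrix (Fin n) (Fin n) ℝ be differentiable with Q(0) = P₀ and Q'(t) = A * Q(t) + Q(t) * Aᵀ + S * Sᵀ for every t ∈ ℝ. Then for every t ∈ ℝ, Q(t) = exp(tA) * P₀ * exp(tAᵀ) + ∫ s in (0)..(t), exp(sA) * (S * Sᵀ) * exp(sAᵀ) ds. (Uniqueness of the solution of the differential Lyapunov equation.) -/
open scoped Matrix
open NormedSpace MeasureTheory

attribute [local instance] Matrix.linftyOpNormedRing Matrix.linftyOpNormedAlgebra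

/-- Uniqueness of the solution of the differential Lyapunov equation
`Q̇(t) = A Q(t) + Q(t) Aᵀ + S Sᵀ`, `Q(0) = P₀`. -/
theorem lyapunov_solution_unique (n : ℕ) (A S P₀ : Matrix (Fin n) (Fin n) ℝ)
    (Q : ℝ → Matrix (Fin n) (Fin n) ℝ)
    (hQ0 : Q 0 = P₀)
    (hQ : ∀ t : ℝ, HasDerivAt Q (A * Q t + Q t * Aᵀ + S * Sᵀ) t) :
    ∀ t : ℝ, Q t =
      exp (t • A) * P₀ * exp (t • Aᵀ) +
        ∫ s in (0:ℝ)..t, exp (s • A) * (S * Sᵀ) * exp (s • Aᵀ) := by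
  set M := S * Sᵀ with hM
  set E : ℝ → Matrix (Fin n) (Fin n) ℝ := fun t => exp (t • A) with hEdef
  set F : ℝ → Matrix (Fin n) (Fin n) ℝ := fun t => exp (t • Aᵀ) with hFdef
  set e : ℝ → Matrix (Fin n) (Fin n) ℝ := fun t => exp (t • (-A)) with hedef
  set f : ℝ → Matrix (Fin n) (Fin n) ℝ := fun t => exp (t • (-Aᵀ)) with hfdef
  have hE : ∀ t : ℝ, HasDerivAt E (A * E t) t := fun t => hasDerivAt_exp_smul_const' A t
  have hF : ∀ t : ℝ, HasDerivAt F (F t * Aᵀ) t := fun t => hasDerivAt_exp_smul_const Aᵀ t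
  have he : ∀ t : ℝ, HasDerivAt e (e t * (-A)) t := fun t => hasDerivAt_exp_smul_const (-A) t
  have hf : ∀ t : ℝ, HasDerivAt f ((-Aᵀ) * f t) t := fun t => hasDerivAt_exp_smul_const' (-Aᵀ) t
  have cE : Continuous E := continuous_iff_continuousAt.mpr fun t => (hE t).continuousAt
  have cF : Continuous F := continuous_iff_continuousAt.mpr fun t => (hF t).continuousAt
  have hcont : Continuous (fun s : ℝ => E s * M * F s) :=
    (cE.mul continuous_const).mul cF
  set I : ℝ → Matrix (Fin n) (Fin n) ℝ := fun t => ∫ s in (0:ℝ)..t, E s * M * F s with hIdef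
  have hI : ∀ t : ℝ, HasDerivAt I (E t * M * F t) t := fun t =>
    (hcont.integral_hasStrictDerivAt 0 t).hasDerivAt
  -- value at 0
  have hE0 : E 0 = 1 := by simp [hEdef]
  have hF0 : F 0 = 1 := by simp [hFdef]
  have he0 : e 0 = 1 := by simp [hedef]
  have hf0 : f 0 = 1 := by simp [hfdef]
  have hI0 : I 0 = 0 := intervalIntegral.integral_same
  -- Step 1: E t * M * F t = M + (A * I t + I t * Aᵀ)
  set H : ℝ → Matrix (Fin n) (Fin n) ℝ := fun t => E t * M * F t - (A * I t + I t * Aᵀ)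
    with hHdef
  have hH : ∀ t : ℝ, HasDerivAt H 0 t := by
    intro t
    have h1 := (((hE t).mul_const M).mul (hF t)).sub
      (((hI t).const_mul A).add ((hI t).mul_const Aᵀ))
    have : (A * E t * M) * F t + E t * M * (F t * Aᵀ)
        - (A * (E t * M * F t) + (E t * M * F t) * Aᵀ) = 0 := by noncomm_ring
    rwa [this] at h1
  have key : ∀ t : ℝ, H t = M := by
    intro t
    have hconst := is_const_of_deriv_eq_zero (𝕜 := ℝ) (f := H)
      (fun s => (hH s).differentiableAt) (fun s => (hH s).deriv) t 0
    rw [hconst]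
    simp [hHdef, hE0, hF0, hI0]
  -- Step 2: G t := e t * (Q t - I t) * f t is constant = P₀
  set G : ℝ → Matrix (Fin n) (Fin n) ℝ := fun t => e t * (Q t - I t) * f t with hGdef
  have hG : ∀ t : ℝ, HasDerivAt G 0 t := by
    intro t
    have hD : HasDerivAt (fun s => Q s - I s)
        (A * Q t + Q t * Aᵀ + M - E t * M * F t) t := (hQ t).sub (hI t)
    have hg := ((he t).mul hD).mul (hf t)
    have inner : A * I t + I t * Aᵀ + M - E t * M * F t = 0 := by
      have h := key t
      rw [hHdef] at h
      simp only at h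
      rw [sub_eq_iff_eq_add] at h
      rw [h]
      abel
    have expr0 : (e t * -A * (Q t - I t) + e t * (A * Q t + Q t * Aᵀ + M - E t * M * F t)) * f t
        + e t * (Q t - I t) * (-Aᵀ * f t) = 0 := by
      have h2 : (e t * -A * (Q t - I t) + e t * (A * Q t + Q t * Aᵀ + M - E t * M * F t)) * f t
          + e t * (Q t - I t) * (-Aᵀ * f t)
          = e t * (A * I t + I t * Aᵀ + M - E t * M * F t) * f t := by noncomm_ring
      rw [h2, inner, mul_zero, zero_mul]
    simp only [Pi.mul_apply] at hg
    rwa [expr0] at hg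
  have hGconst : ∀ t : ℝ, G t = P₀ := by
    intro t
    have hconst := is_const_of_deriv_eq_zero (𝕜 := ℝ) (f := G)
      (fun s => (hG s).differentiableAt) (fun s => (hG s).deriv) t 0
    rw [hconst]
    simp [hGdef, he0, hf0, hI0, hQ0]
  -- Step 3: unfold
  intro t
  have hEe : E t * e t = 1 := by
    rw [hEdef, hedef]
    simp only
    erw [← exp_add_of_commute (x := t • A) (y := t • -A) ((((Commute.refl A).neg_right).smul_left t).smul_right t)]
    rw [smul_neg, add_neg_cancel, exp_zero]
  have hfF : f t * F t = 1 := by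
    rw [hFdef, hfdef]
    simp only
    erw [← exp_add_of_commute (x := t • -Aᵀ) (y := t • Aᵀ) ((((Commute.refl Aᵀ).neg_left).smul_left t).smul_right t)]
    rw [smul_neg, neg_add_cancel, exp_zero]
  have hQI : Q t - I t = E t * P₀ * F t := by
    calc Q t - I t = (E t * e t) * (Q t - I t) * (f t * F t) := by
            rw [hEe, hfF, one_mul, mul_one]
      _ = E t * (e t * (Q t - I t) * f t) * F t := by noncomm_ring
      _ = E t * P₀ * F t := by rw [show e t * (Q t - I t) * f t = P₀ from hGconst t]
  show Q t = E t * P₀ * F t + I t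
  rw [← hQI]
  abel
end

section
/- Let A be a real n×n matrix and let 𝓛₁ : Matrix (Fin n) (Fin n) ℝ →L[ℝ] Matrix (Fin n) (Fin n) ℝ be the continuous linear map 𝓛₁(P) = A * P + P * Aᵀ. Then for every t ∈ ℝ and every n×n matrix P₀, (exp(t • 𝓛₁)) P₀ = exp(tA) * P₀ * exp(tAᵀ), where the exponential on the left is the exponential of a continuous linear operator on the space of n×n matrices. (Operator-exponential form of the exact flow T₁ used in the splitting scheme.) -/
open scoped Matrix
open NormedSpace

attribute [local instance] Matrix.linftyOpNormedRing Matrix.linftyOpNormedAlgebra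

instance instIsTopologicalRingMatrixCLM (n : ℕ) :
    IsTopologicalRing (Matrix (Fin n) (Fin n) ℝ →L[ℝ] Matrix (Fin n) (Fin n) ℝ) :=
  @NonUnitalSeminormedRing.toIsTopologicalRing _
    (@ContinuousLinearMap.toNormedRing ℝ (Matrix (Fin n) (Fin n) ℝ)
      Matrix.linftyOpNormedAddCommGroup _
      Matrix.linftyOpNormedAlgebra.toNormedSpace).toNonUnitalNormedRing.toNonUnitalSeminormedRing

section Aux

variable (n : ℕ)

local notation "𝔸" => Matrix (Fin n) (Fin n) ℝ

/-- Left multiplication as a ring hom into continuous linear maps. -/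
noncomputable def leftMulHom : 𝔸 →+* (𝔸 →L[ℝ] 𝔸) where
  toFun a := ContinuousLinearMap.mul ℝ 𝔸 a
  map_one' := by ext P : 1; simp; rfl
  map_mul' a b := by ext P : 1; simp [mul_assoc]; rfl
  map_zero' := by ext P : 1; simp; rfl
  map_add' a b := by ext P : 1; simp [add_mul]; rfl

/-- Right multiplication, as a ring hom from the opposite algebra into continuous
linear maps. -/
noncomputable def rightMulHom : 𝔸ᵐᵒᵖ →+* (𝔸 →L[ℝ] 𝔸) where
  toFun b := (ContinuousLinearMap.mul ℝ 𝔸).flip b.unop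
  map_one' := by ext P : 1; simp; rfl
  map_mul' a b := by ext P : 1; simp [mul_assoc]; exact (mul_assoc P _ _).symm
  map_zero' := by ext P : 1; simp; rfl
  map_add' a b := by ext P : 1; simp [mul_add]; rfl

lemma leftMulHom_continuous : Continuous (leftMulHom n) :=
  (ContinuousLinearMap.mul ℝ 𝔸).continuous

lemma rightMulHom_continuous : Continuous (rightMulHom n) :=
  ((ContinuousLinearMap.mul ℝ 𝔸).flip.continuous).comp MulOpposite.continuous_unop

lemma left_right_commute (a b : 𝔸) :
    Commute (leftMulHom n a) (rightMulHom n (MulOpposite.op b)) := by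
  ext P : 1
  exact (mul_assoc a P b).symm

end Aux

/-- Operator-exponential form of the exact flow `T₁` used in the splitting scheme:
for `𝓛₁(P) = A P + P Aᵀ` one has `exp(t 𝓛₁) P₀ = exp(tA) P₀ exp(tAᵀ)`. -/
theorem operator_exp_flow_T1 (n : ℕ) (A : Matrix (Fin n) (Fin n) ℝ)
    (𝓛₁ : Matrix (Fin n) (Fin n) ℝ →L[ℝ] Matrix (Fin n) (Fin n) ℝ)
    (h𝓛₁ : ∀ P : Matrix (Fin n) (Fin n) ℝ, 𝓛₁ P = A * P + P * Aᵀ) :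
    ∀ (t : ℝ) (P₀ : Matrix (Fin n) (Fin n) ℝ),
      exp (t • 𝓛₁) P₀ = exp (t • A) * P₀ * exp (t • Aᵀ) := by
  intro t P₀
  have hdecomp : t • 𝓛₁ = leftMulHom n (t • A) + rightMulHom n (MulOpposite.op (t • Aᵀ)) := by
    ext P : 1
    simp [leftMulHom, rightMulHom, h𝓛₁, smul_add, smul_mul_assoc, mul_smul_comm, mul_add]
    change _ = (t • A) * P + P * (t • Aᵀ)
    rw [smul_mul_assoc, mul_smul_comm]
  letI iNR : NormedRing (Matrix (Fin n) (Fin n) ℝ →L[ℝ] Matrix (Fin n) (Fin n) ℝ) :=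
    @ContinuousLinearMap.toNormedRing ℝ (Matrix (Fin n) (Fin n) ℝ)
      Matrix.linftyOpNormedAddCommGroup _ Matrix.linftyOpNormedAlgebra.toNormedSpace
  letI iNA : NormedAlgebra ℝ (Matrix (Fin n) (Fin n) ℝ →L[ℝ] Matrix (Fin n) (Fin n) ℝ) :=
    @ContinuousLinearMap.toNormedAlgebra ℝ (Matrix (Fin n) (Fin n) ℝ)
      Matrix.linftyOpNormedAddCommGroup.toSeminormedAddCommGroup _ Matrix.linftyOpNormedAlgebra.toNormedSpace
  letI iNQ : NormedAlgebra ℚ (Matrix (Fin n) (Fin n) ℝ →L[ℝ] Matrix (Fin n) (Fin n) ℝ) :=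
    NormedAlgebra.restrictScalars ℚ ℝ _
  haveI iCS := FiniteDimensional.complete ℝ (Matrix (Fin n) (Fin n) ℝ →L[ℝ] Matrix (Fin n) (Fin n) ℝ)
  have hcomm := @exp_add_of_commute _ iNR iNQ iCS _ _
      (left_right_commute n (t • A) (t • Aᵀ))
  have h1 := map_exp (leftMulHom n) (leftMulHom_continuous n) (t • A)
  have h2 := map_exp (rightMulHom n) (rightMulHom_continuous n) (MulOpposite.op (t • Aᵀ))
  rw [hdecomp]
  erw [hcomm, ← h1, ← h2]
  rw [exp_op]
  simp [leftMulHom, rightMulHom, ContinuousLinearMap.mul_apply, mul_assoc]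
  rfl
end

section
/- Let S be a real n×n matrix and let 𝓛₂ : Matrix (Fin n) (Fin n) ℝ →L[ℝ] Matrix (Fin n) (Fin n) ℝ be the continuous linear map 𝓛₂(P) = S * P * Sᵀ. Then for every t ∈ ℝ and every n×n matrix P₀, (exp(t • 𝓛₂)) P₀ = ∑_{k=0}^{∞} (t^k / k!) • (S^k * P₀ * (Sᵀ)^k), the series converging in the normed space of n×n real matrices. (Exact solution flow T₂ of the second splitting subproblem Ṗ = SPSᵀ.) -/
set_option synthInstance.maxHeartbeats 1000000
set_option maxHeartbeats 1000000


open scoped Matrix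
open NormedSpace

attribute [local instance] Matrix.linftyOpNormedRing Matrix.linftyOpNormedAlgebra

instance matrixCLM_isTopologicalRing (n : ℕ) :
    IsTopologicalRing (Matrix (Fin n) (Fin n) ℝ →L[ℝ] Matrix (Fin n) (Fin n) ℝ) :=
  @NonUnitalSeminormedRing.toIsTopologicalRing _
    (@NonUnitalNormedRing.toNonUnitalSeminormedRing _
      (@NormedRing.toNonUnitalNormedRing _ ContinuousLinearMap.toNormedRing))

/-- Exact solution flow `T₂` of the second splitting subproblem `Ṗ = S P Sᵀ`:
`exp(t 𝓛₂) P₀ = ∑_{k} (tᵏ/k!) • (Sᵏ P₀ (Sᵀ)ᵏ)`. -/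
theorem operator_exp_flow_T2 (n : ℕ) (S : Matrix (Fin n) (Fin n) ℝ)
    (𝓛₂ : Matrix (Fin n) (Fin n) ℝ →L[ℝ] Matrix (Fin n) (Fin n) ℝ)
    (h𝓛₂ : ∀ P : Matrix (Fin n) (Fin n) ℝ, 𝓛₂ P = S * P * Sᵀ) :
    ∀ (t : ℝ) (P₀ : Matrix (Fin n) (Fin n) ℝ),
      exp (t • 𝓛₂) P₀ =
        ∑' k : ℕ, (t ^ k / (Nat.factorial k : ℝ)) • (S ^ k * P₀ * (Sᵀ) ^ k) := by
  intro t P₀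
  have hpow : ∀ (k : ℕ) (P : Matrix (Fin n) (Fin n) ℝ),
      (𝓛₂ ^ k) P = S ^ k * P * (Sᵀ) ^ k := by
    intro k
    induction k with
    | zero => intro P; simp
    | succ k ih =>
      intro P
      rw [pow_succ', ContinuousLinearMap.mul_apply, ih, h𝓛₂,
        pow_succ' S, pow_succ (Sᵀ)]
      noncomm_ring
  rw [exp_eq_tsum ℝ]
  beta_reduce
  have hsum : Summable fun k : ℕ =>
      ((k.factorial : ℝ)⁻¹ • (t • 𝓛₂) ^ k) :=
    haveI : CompleteSpace (Matrix (Fin n) (Fin n) ℝ) := FiniteDimensional.complete ℝ _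
    @expSeries_summable' ℝ _ _ _ _ ContinuousLinearMap.toNormedRing
      ContinuousLinearMap.toNormedAlgebra ContinuousLinearMap.instCompleteSpace (t • 𝓛₂)
  have := ((ContinuousLinearMap.apply ℝ
      (Matrix (Fin n) (Fin n) ℝ) P₀).map_tsum hsum)
  simp only [ContinuousLinearMap.apply_apply] at this
  rw [show (∑' z : ℕ, ((z.factorial : ℝ)⁻¹ • (t • 𝓛₂) ^ z)) P₀ =
      ∑' z : ℕ, (((z.factorial : ℝ)⁻¹ • (t • 𝓛₂) ^ z) P₀) from this]
  congr 1
  ext k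
  rw [ContinuousLinearMap.smul_apply, smul_pow, ContinuousLinearMap.smul_apply,
    hpow, smul_smul, div_eq_inv_mul]
end

section
/- Let A, S, P₀ be real n×n matrices, h ≥ 0, s a natural number, and let w : Fin s → ℝ with wₖ ≥ 0 and τ : Fin s → ℝ be quadrature weights and nodes. Form the n×(n + s·n) block matrix P₁ = [exp(hA) * P₀, √(h w₁) • exp(τ₁ A) * S, …, √(h wₛ) • exp(τₛ A) * S]. Then P₁ * P₁ᵀ = exp(hA) * (P₀ * P₀ᵀ) * exp(hAᵀ) + h • ∑_{k} wₖ • (exp(τₖ A) * (S * Sᵀ) * exp(τₖ Aᵀ)). (The low-rank factor produced by the quadrature scheme reproduces exactly the quadrature approximation of the Lyapunov solution formula.) -/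
open scoped Matrix
open NormedSpace

attribute [local instance] Matrix.linftyOpNormedRing Matrix.linftyOpNormedAlgebra

lemma aux_scaled_cols_mul_transpose {n s : ℕ} (c : Fin s → ℝ) (hc : ∀ k, 0 ≤ c k)
    (M : Fin s → Matrix (Fin n) (Fin n) ℝ) :
    (Matrix.of fun i (p : Fin s × Fin n) => (Real.sqrt (c p.1) • M p.1) i p.2) *
      (Matrix.of fun i (p : Fin s × Fin n) => (Real.sqrt (c p.1) • M p.1) i p.2)ᵀ =
    ∑ k : Fin s, c k • (M k * (M k)ᵀ) := by
  ext i j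
  simp only [Matrix.mul_apply, Matrix.transpose_apply, Matrix.of_apply,
    Matrix.smul_apply, smul_eq_mul, Matrix.sum_apply, Fintype.sum_prod_type]
  refine Finset.sum_congr rfl fun k _ => ?_
  rw [Finset.mul_sum]
  refine Finset.sum_congr rfl fun m _ => ?_
  ring_nf
  rw [Real.sq_sqrt (hc k)]
  ring

/-- The low-rank factor
`P₁ = [exp(hA) P₀, √(h w₁) exp(τ₁ A) S, …, √(h wₛ) exp(τₛ A) S]`
produced by the quadrature scheme reproduces exactly the quadrature approximation of
the Lyapunov solution formula. -/
theorem lowrank_factor_quadrature (n s : ℕ) (A S P₀ : Matrix (Fin n) (Fin n) ℝ)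
    (h : ℝ) (hh : 0 ≤ h) (w : Fin s → ℝ) (hw : ∀ k, 0 ≤ w k) (τ : Fin s → ℝ)
    (P₁ : Matrix (Fin n) (Fin n ⊕ (Fin s × Fin n)) ℝ)
    (hP₁ : P₁ = Matrix.fromCols (exp (h • A) * P₀)
      (Matrix.of fun i (p : Fin s × Fin n) =>
        (Real.sqrt (h * w p.1) • (exp (τ p.1 • A) * S)) i p.2)) :
    P₁ * P₁ᵀ =
      exp (h • A) * (P₀ * P₀ᵀ) * exp (h • Aᵀ) +
        h • ∑ k : Fin s, w k • (exp (τ k • A) * (S * Sᵀ) * exp (τ k • Aᵀ)) := by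
  subst hP₁
  rw [Matrix.transpose_fromCols, Matrix.fromCols_mul_fromRows]
  have hT : ∀ t : ℝ, exp (t • Aᵀ) = (exp (t • A))ᵀ := fun t => by
    rw [← Matrix.transpose_smul, Matrix.exp_transpose]
  congr 1
  · rw [hT, Matrix.transpose_mul, Matrix.mul_assoc, Matrix.mul_assoc, Matrix.mul_assoc]
  · have hR : ∀ k : Fin s,
        exp (τ k • A) * (S * Sᵀ) * exp (τ k • Aᵀ)
          = (exp (τ k • A) * S) * (exp (τ k • A) * S)ᵀ := fun k => by
      simp only [hT, Matrix.transpose_mul, Matrix.mul_assoc]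
    simp only [hR]
    rw [aux_scaled_cols_mul_transpose (fun k => h * w k)
      (fun k => mul_nonneg hh (hw k)) (fun k => exp (τ k • A) * S), Finset.smul_sum]
    exact Finset.sum_congr rfl fun k _ => (smul_smul h (w k) _).symm
end

section
/- Let A, S be real n×n matrices and suppose there exist constants C ≥ 0 and λ > 0 such that ‖exp(tA)‖ ≤ C * Real.exp(−λ t) for all t ≥ 0. Then the function s ↦ exp(sA) * (S * Sᵀ) * exp(sAᵀ) is integrable on [0, ∞), and the matrix P∞ = ∫ s in Set.Ici (0:ℝ), exp(sA) * (S * Sᵀ) * exp(sAᵀ) ds satisfies the algebraic Lyapunov equation A * P∞ + P∞ * Aᵀ + S * Sᵀ = 0. (The fluctuation–dissipation relation used to determine the noise matrix S from the stationary covariance.) -/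
open scoped Matrix
open NormedSpace MeasureTheory
open scoped NNReal

attribute [local instance] Matrix.linftyOpNormedRing Matrix.linftyOpNormedAlgebra

lemma norm_transpose_le_card_mul {n : ℕ} (M : Matrix (Fin n) (Fin n) ℝ) :
    ‖Mᵀ‖ ≤ n * ‖M‖ := by
  have hentry : ∀ i j, ‖M i j‖₊ ≤ ‖M‖₊ := by
    intro i j
    rw [Matrix.linfty_opNNNorm_def]
    refine le_trans (Finset.single_le_sum (f := fun k => ‖M i k‖₊)
      (fun k _ => zero_le) (Finset.mem_univ j)) ?_
    exact Finset.le_sup (f := fun i => ∑ j, ‖M i j‖₊) (Finset.mem_univ i)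
  have h : ‖Mᵀ‖₊ ≤ (n : ℝ≥0) * ‖M‖₊ := by
    rw [Matrix.linfty_opNNNorm_def]
    refine Finset.sup_le fun i _ => ?_
    calc ∑ j, ‖Mᵀ i j‖₊ ≤ ∑ _j : Fin n, ‖M‖₊ :=
          Finset.sum_le_sum fun j _ => hentry j i
      _ = (n : ℝ≥0) * ‖M‖₊ := by
          simp [Finset.sum_const, nsmul_eq_mul]
  calc ‖Mᵀ‖ = ((‖Mᵀ‖₊ : ℝ≥0) : ℝ) := rfl
    _ ≤ (((n : ℝ≥0) * ‖M‖₊ : ℝ≥0) : ℝ) := by exact_mod_cast h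
    _ = n * ‖M‖ := by push_cast; ring

/-- The fluctuation–dissipation relation: under exponential stability of `A`, the
integrand of the stationary covariance is integrable on `[0, ∞)` and
`P∞ = ∫_0^∞ exp(sA) S Sᵀ exp(sAᵀ) ds` satisfies the algebraic Lyapunov equation
`A P∞ + P∞ Aᵀ + S Sᵀ = 0`. -/
theorem fluctuation_dissipation (n : ℕ) (A S : Matrix (Fin n) (Fin n) ℝ)
    (C lam : ℝ) (hC : 0 ≤ C) (hlam : 0 < lam)
    (hstab : ∀ t : ℝ, 0 ≤ t → ‖exp (t • A)‖ ≤ C * Real.exp (-lam * t)) :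
    @IntegrableOn _ _ _ _ SeminormedAddGroup.toContinuousENorm (fun s : ℝ => exp (s • A) * (S * Sᵀ) * exp (s • Aᵀ))
        (Set.Ici (0:ℝ)) volume ∧
      A * (∫ s in Set.Ici (0:ℝ), exp (s • A) * (S * Sᵀ) * exp (s • Aᵀ)) +
        (∫ s in Set.Ici (0:ℝ), exp (s • A) * (S * Sᵀ) * exp (s • Aᵀ)) * Aᵀ +
        S * Sᵀ = 0 := by
  haveI : TopologicalSpace.PseudoMetrizableSpace (Matrix (Fin n) (Fin n) ℝ) :=
    inferInstanceAs (TopologicalSpace.PseudoMetrizableSpace (Fin n → Fin n → ℝ))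
  set Q : Matrix (Fin n) (Fin n) ℝ := S * Sᵀ with hQ
  set F : ℝ → Matrix (Fin n) (Fin n) ℝ :=
    fun s => exp (s • A) * Q * exp (s • Aᵀ) with hF
  -- transpose bound
  have hT : ∀ s : ℝ, 0 ≤ s → ‖exp (s • Aᵀ)‖ ≤ (n * C) * Real.exp (-lam * s) := by
    intro s hs
    have h1 : exp (s • Aᵀ) = (exp (s • A))ᵀ := by
      rw [← Matrix.transpose_smul, Matrix.exp_transpose]
    rw [h1]
    calc ‖(exp (s • A))ᵀ‖ ≤ n * ‖exp (s • A)‖ := norm_transpose_le_card_mul _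
      _ ≤ n * (C * Real.exp (-lam * s)) := by
          exact mul_le_mul_of_nonneg_left (hstab s hs) (by positivity)
      _ = (n * C) * Real.exp (-lam * s) := by ring
  -- pointwise bound
  have hbound : ∀ s : ℝ, s ∈ Set.Ici (0:ℝ) →
      ‖F s‖ ≤ (C * ‖Q‖ * (n * C)) * Real.exp (-(2 * lam) * s) := by
    intro s hs
    have hs' : (0:ℝ) ≤ s := hs
    calc ‖F s‖ ≤ ‖exp (s • A) * Q‖ * ‖exp (s • Aᵀ)‖ := norm_mul_le _ _
      _ ≤ ‖exp (s • A)‖ * ‖Q‖ * ‖exp (s • Aᵀ)‖ := by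
          exact mul_le_mul_of_nonneg_right (norm_mul_le _ _) (norm_nonneg _)
      _ ≤ (C * Real.exp (-lam * s)) * ‖Q‖ * ((n * C) * Real.exp (-lam * s)) := by
          have h1 := hstab s hs'
          have h2 := hT s hs'
          have hn : (0:ℝ) ≤ ‖exp (s • A)‖ * ‖Q‖ := by positivity
          refine mul_le_mul ?_ h2 (norm_nonneg _) (by positivity)
          exact mul_le_mul_of_nonneg_right h1 (norm_nonneg _)
      _ = (C * ‖Q‖ * (n * C)) * Real.exp (-(2 * lam) * s) := by
          rw [show (-(2 * lam) * s) = (-lam * s) + (-lam * s) by ring, Real.exp_add]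
          ring
  -- continuity of F
  have hFcont : Continuous F := by
    have h1 : Continuous fun s : ℝ => exp (s • A) :=
      exp_continuous.comp (continuous_id.smul continuous_const)
    have h2 : Continuous fun s : ℝ => exp (s • Aᵀ) :=
      exp_continuous.comp (continuous_id.smul continuous_const)
    exact (h1.mul continuous_const).mul h2
  -- integrability of F on Ici 0
  have hint : @IntegrableOn _ _ _ _ SeminormedAddGroup.toContinuousENorm F (Set.Ici (0:ℝ)) volume := by
    have hg : IntegrableOn (fun s : ℝ => (C * ‖Q‖ * (n * C)) * Real.exp (-(2 * lam) * s))
        (Set.Ici (0:ℝ)) volume := by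
      rw [integrableOn_Ici_iff_integrableOn_Ioi]
      exact (exp_neg_integrableOn_Ioi 0 (by linarith)).const_mul _
    refine Integrable.mono' hg hFcont.aestronglyMeasurable.restrict ?_
    exact (ae_restrict_iff' measurableSet_Ici).2 (ae_of_all _ hbound)
  have hintIoi : @IntegrableOn _ _ _ _ SeminormedAddGroup.toContinuousENorm F (Set.Ioi (0:ℝ)) volume :=
    hint.mono_set Set.Ioi_subset_Ici_self
  -- derivative of F
  have hderiv : ∀ s ∈ Set.Ici (0:ℝ), HasDerivAt F (A * F s + F s * Aᵀ) s := by
    intro s _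
    have h1 : HasDerivAt (fun u : ℝ => exp (u • A)) (A * exp (s • A)) s :=
      hasDerivAt_exp_smul_const' A s
    have h2 : HasDerivAt (fun u : ℝ => exp (u • Aᵀ)) (exp (s • Aᵀ) * Aᵀ) s :=
      hasDerivAt_exp_smul_const Aᵀ s
    have h3 := (h1.mul_const Q).mul h2
    refine h3.congr_deriv ?_
    simp only [hF, mul_assoc, mul_add, add_mul]
  -- CLMs for left/right multiplication
  let L : Matrix (Fin n) (Fin n) ℝ →L[ℝ] Matrix (Fin n) (Fin n) ℝ :=
    ContinuousLinearMap.mul ℝ _ A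
  let R : Matrix (Fin n) (Fin n) ℝ →L[ℝ] Matrix (Fin n) (Fin n) ℝ :=
    (ContinuousLinearMap.mul ℝ (Matrix (Fin n) (Fin n) ℝ)).flip Aᵀ
  have hLapp : ∀ M, L M = A * M := fun M => rfl
  have hRapp : ∀ M, R M = M * Aᵀ := fun M => rfl
  -- integrability of the derivative
  have hintA : @IntegrableOn _ _ _ _ SeminormedAddGroup.toContinuousENorm (fun s => A * F s) (Set.Ioi (0:ℝ)) volume := by
    exact L.integrable_comp hintIoi
  have hintB : @IntegrableOn _ _ _ _ SeminormedAddGroup.toContinuousENorm (fun s => F s * Aᵀ) (Set.Ioi (0:ℝ)) volume := by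
    exact R.integrable_comp hintIoi
  have hintG : @IntegrableOn _ _ _ _ SeminormedAddGroup.toContinuousENorm (fun s => A * F s + F s * Aᵀ) (Set.Ioi (0:ℝ)) volume :=
    hintA.add hintB
  -- F tends to 0 at top
  have htend : Filter.Tendsto F Filter.atTop (nhds 0) := by
    have h0 : Filter.Tendsto (fun s : ℝ => (C * ‖Q‖ * (n * C)) * Real.exp (-(2 * lam) * s))
        Filter.atTop (nhds 0) := by
      have hb : Filter.Tendsto (fun s : ℝ => Real.exp (-(2 * lam) * s))
          Filter.atTop (nhds 0) := by
        apply Real.tendsto_exp_atBot.comp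
        have : Filter.Tendsto (fun s : ℝ => -(2 * lam) * s) Filter.atTop Filter.atBot := by
          apply Filter.Tendsto.const_mul_atTop_of_neg (by linarith) Filter.tendsto_id
        exact this
      simpa using hb.const_mul (C * ‖Q‖ * (n * C))
    refine squeeze_zero_norm' ?_ h0
    filter_upwards [Filter.eventually_ge_atTop (0:ℝ)] with s hs using hbound s hs
  -- FTC on [0, ∞)
  have key : (∫ s in Set.Ioi (0:ℝ), (A * F s + F s * Aᵀ)) = 0 - F 0 :=
    integral_Ioi_of_hasDerivAt_of_tendsto' hderiv hintG htend
  have hF0 : F 0 = Q := by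
    simp [hF]
  -- pull constants out of integrals
  have hA : (∫ s in Set.Ioi (0:ℝ), A * F s) = A * ∫ s in Set.Ioi (0:ℝ), F s := by
    have := L.integral_comp_comm hintIoi
    exact this
  have hB : (∫ s in Set.Ioi (0:ℝ), F s * Aᵀ) = (∫ s in Set.Ioi (0:ℝ), F s) * Aᵀ := by
    have := R.integral_comp_comm hintIoi
    exact this
  have hsplit : (∫ s in Set.Ioi (0:ℝ), (A * F s + F s * Aᵀ))
      = (∫ s in Set.Ioi (0:ℝ), A * F s) + ∫ s in Set.Ioi (0:ℝ), F s * Aᵀ :=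
    integral_add hintA hintB
  refine ⟨hint, ?_⟩
  have hIci : (∫ s in Set.Ici (0:ℝ), F s) = ∫ s in Set.Ioi (0:ℝ), F s :=
    integral_Ici_eq_integral_Ioi
  rw [hIci]
  have : A * (∫ s in Set.Ioi (0:ℝ), F s) + (∫ s in Set.Ioi (0:ℝ), F s) * Aᵀ = -Q := by
    rw [← hA, ← hB, ← hsplit, key, hF0, zero_sub]
  rw [this]
  simp
end

section
/- Let A, S, P₀ be real n×n matrices and suppose there exist constants C ≥ 0 and λ > 0 such that ‖exp(tA)‖ ≤ C * Real.exp(−λ t) for all t ≥ 0. Define P(t) = exp(tA) * P₀ * exp(tAᵀ) + ∫ s in (0)..(t), exp(sA) * (S * Sᵀ) * exp(sAᵀ) ds and P∞ = ∫ s in Set.Ici (0:ℝ), exp(sA) * (S * Sᵀ) * exp(sAᵀ) ds. Then P(t) tends to P∞ as t → ∞. (Under stability of A, the covariance of the additive-noise model converges to the stationary covariance appearing in the fluctuation–dissipation relation.) -/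
open scoped Matrix
open NormedSpace MeasureTheory Filter
open scoped NNReal

attribute [local instance] Matrix.linftyOpNormedRing Matrix.linftyOpNormedAlgebra

private lemma entry_le_linfty {n : ℕ} (B : Matrix (Fin n) (Fin n) ℝ) (i j : Fin n) :
    ‖B i j‖ ≤ ‖B‖ := by
  have h1 : ‖B i j‖₊ ≤ ∑ j' : Fin n, ‖B i j'‖₊ :=
    Finset.single_le_sum (f := fun j' => ‖B i j'‖₊) (fun _ _ => zero_le) (Finset.mem_univ j)
  have h2 : (∑ j' : Fin n, ‖B i j'‖₊) ≤ ‖B‖₊ := by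
    rw [Matrix.linfty_opNNNorm_def]
    exact Finset.le_sup (f := fun i : Fin n => ∑ j : Fin n, ‖B i j‖₊) (Finset.mem_univ i)
  exact_mod_cast h1.trans h2


private lemma transpose_norm_le {n : ℕ} (B : Matrix (Fin n) (Fin n) ℝ) :
    ‖Bᵀ‖ ≤ n * ‖B‖ := by
  rw [Matrix.linfty_opNorm_def]
  have : ∀ i : Fin n, (∑ j : Fin n, ‖Bᵀ i j‖₊ : ℝ≥0) ≤ ‖B‖₊ * n := by
    intro i
    calc (∑ j : Fin n, ‖Bᵀ i j‖₊ : ℝ≥0) ≤ ∑ _j : Fin n, ‖B‖₊ := by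
          refine Finset.sum_le_sum fun j _ => ?_
          have := entry_le_linfty B j i
          simpa [← NNReal.coe_le_coe, Matrix.transpose_apply] using this
      _ = ‖B‖₊ * n := by simp [mul_comm]
  have h : ((Finset.univ : Finset (Fin n)).sup fun i => ∑ j : Fin n, ‖Bᵀ i j‖₊) ≤ ‖B‖₊ * n :=
    Finset.sup_le fun i _ => this i
  calc (((Finset.univ : Finset (Fin n)).sup fun i => ∑ j : Fin n, ‖Bᵀ i j‖₊ : ℝ≥0) : ℝ)
      ≤ ((‖B‖₊ * n : ℝ≥0) : ℝ) := by exact_mod_cast h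
    _ = n * ‖B‖ := by push_cast [coe_nnnorm]; ring

/-- Under exponential stability of `A`, the covariance of the additive-noise model
converges to the stationary covariance appearing in the fluctuation–dissipation
relation. -/
theorem covariance_tendsto_stationary (n : ℕ) (A S P₀ : Matrix (Fin n) (Fin n) ℝ)
    (C lam : ℝ) (hC : 0 ≤ C) (hlam : 0 < lam)
    (hstab : ∀ t : ℝ, 0 ≤ t → ‖exp (t • A)‖ ≤ C * Real.exp (-lam * t))
    (P : ℝ → Matrix (Fin n) (Fin n) ℝ)
    (hP : ∀ t : ℝ, P t =
      exp (t • A) * P₀ * exp (t • Aᵀ) +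
        ∫ s in (0:ℝ)..t, exp (s • A) * (S * Sᵀ) * exp (s • Aᵀ)) :
    Tendsto P atTop
      (nhds (∫ s in Set.Ici (0:ℝ), exp (s • A) * (S * Sᵀ) * exp (s • Aᵀ))) := by
  have hPfun : P = fun t => exp (t • A) * P₀ * exp (t • Aᵀ) +
      ∫ s in (0:ℝ)..t, exp (s • A) * (S * Sᵀ) * exp (s • Aᵀ) := funext hP
  -- transpose of exponential
  have hT : ∀ t : ℝ, exp (t • Aᵀ) = (exp (t • A))ᵀ := fun t => by
    rw [← Matrix.transpose_smul, Matrix.exp_transpose]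
  have hTbound : ∀ t : ℝ, 0 ≤ t → ‖exp (t • Aᵀ)‖ ≤ n * (C * Real.exp (-lam * t)) := by
    intro t ht
    rw [hT]
    exact (transpose_norm_le _).trans
      (mul_le_mul_of_nonneg_left (hstab t ht) (Nat.cast_nonneg n))
  -- general product bound
  have hbound : ∀ (M : Matrix (Fin n) (Fin n) ℝ) (t : ℝ), 0 ≤ t →
      ‖exp (t • A) * M * exp (t • Aᵀ)‖ ≤
        (C * ‖M‖ * (n * C)) * Real.exp (-(2 * lam) * t) := by
    intro M t ht
    have h1 : ‖exp (t • A) * M * exp (t • Aᵀ)‖ ≤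
        ‖exp (t • A)‖ * ‖M‖ * ‖exp (t • Aᵀ)‖ :=
      (norm_mul_le _ _).trans (mul_le_mul_of_nonneg_right (norm_mul_le _ _) (norm_nonneg _))
    have h2 := hstab t ht
    have h3 := hTbound t ht
    have hexp : Real.exp (-lam * t) * Real.exp (-lam * t) = Real.exp (-(2 * lam) * t) := by
      rw [← Real.exp_add]; ring_nf
    have hexp_pos := Real.exp_pos (-lam * t)
    calc ‖exp (t • A) * M * exp (t • Aᵀ)‖
        ≤ ‖exp (t • A)‖ * ‖M‖ * ‖exp (t • Aᵀ)‖ := h1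
      _ ≤ (C * Real.exp (-lam * t)) * ‖M‖ * (n * (C * Real.exp (-lam * t))) := by
          exact mul_le_mul (mul_le_mul_of_nonneg_right h2 (norm_nonneg M)) h3
            (norm_nonneg _) (by positivity)
      _ = (C * ‖M‖ * (n * C)) * (Real.exp (-lam * t) * Real.exp (-lam * t)) := by ring
      _ = (C * ‖M‖ * (n * C)) * Real.exp (-(2 * lam) * t) := by rw [hexp]
  -- continuity of the integrand
  have hcont : Continuous fun s : ℝ => exp (s • A) * (S * Sᵀ) * exp (s • Aᵀ) := by
    have h1 : Continuous fun s : ℝ => exp (s • A) :=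
      exp_continuous.comp (continuous_id.smul continuous_const)
    have h2 : Continuous fun s : ℝ => exp (s • Aᵀ) :=
      exp_continuous.comp (continuous_id.smul continuous_const)
    exact (h1.mul continuous_const).mul h2
  -- integrability on Ioi 0
  letI : ContinuousENorm (Matrix (Fin n) (Fin n) ℝ) := SeminormedAddGroup.toContinuousENorm
  haveI : TopologicalSpace.PseudoMetrizableSpace (Matrix (Fin n) (Fin n) ℝ) :=
    UniformSpace.pseudoMetrizableSpace (u := PseudoMetricSpace.toUniformSpace)
  have hint : IntegrableOn (fun s : ℝ => exp (s • A) * (S * Sᵀ) * exp (s • Aᵀ))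
      (Set.Ioi (0:ℝ)) := by
    refine Integrable.mono' (g := fun s : ℝ =>
        (C * ‖S * Sᵀ‖ * (n * C)) * Real.exp (-(2 * lam) * s)) ?_ ?_ ?_
    · exact (exp_neg_integrableOn_Ioi 0 (by linarith)).const_mul _
    · exact hcont.aestronglyMeasurable.restrict
    · filter_upwards [ae_restrict_mem measurableSet_Ioi] with s hs
      exact hbound _ s (le_of_lt hs)
  -- second term tends to the improper integral
  have h2nd : Tendsto (fun t : ℝ => ∫ s in (0:ℝ)..t,
      exp (s • A) * (S * Sᵀ) * exp (s • Aᵀ)) atTop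
      (nhds (∫ s in Set.Ici (0:ℝ), exp (s • A) * (S * Sᵀ) * exp (s • Aᵀ))) := by
    rw [MeasureTheory.integral_Ici_eq_integral_Ioi]
    exact intervalIntegral_tendsto_integral_Ioi 0 hint tendsto_id
  -- first term tends to 0
  have h1st : Tendsto (fun t : ℝ => exp (t • A) * P₀ * exp (t • Aᵀ)) atTop
      (nhds 0) := by
    have hd : Tendsto (fun t : ℝ => (C * ‖P₀‖ * (n * C)) * Real.exp (-(2 * lam) * t))
        atTop (nhds 0) := by
      have : Tendsto (fun t : ℝ => Real.exp (-(2 * lam) * t)) atTop (nhds 0) := by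
        apply Real.tendsto_exp_atBot.comp
        exact Tendsto.const_mul_atTop_of_neg (by linarith) tendsto_id
      simpa using this.const_mul (C * ‖P₀‖ * (n * C))
    refine squeeze_zero_norm' ?_ hd
    filter_upwards [eventually_ge_atTop (0:ℝ)] with t ht
    exact hbound P₀ t ht
  rw [hPfun]
  have := h1st.add h2nd
  simpa using this
end
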